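/- The continued fraction K_{n=1}^∞ (−1/(2n))/1, i.e. with partial numerators b_n = −1/(2n) and partial denominators a_n = 1, converges to −√(π/(2e))·erfi(1/√2), corresponding to the case α = −2 of the sum-of-products continued fraction. -/

import Mathlib

open Real Filter

/-- Finite continued fraction approximant of depth `N`:
`cf b a N = b 1 / (a 1 + b 2 / (a 2 + ... + b N / a N))`. -/
noncomputable def cf (b a : ℕ → ℝ) (N : ℕ) : ℝ :=
  (List.range N).foldr (fun i acc => b (i + 1) / (a (i + 1) + acc)) 0

/-- The imaginary error function `erfi x = (2/√π) ∫_0^x exp (t²) dt`. -/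
noncomputable def erfi (x : ℝ) : ℝ :=
  (2 / Real.sqrt Real.pi) * ∫ t in (0:ℝ)..x, Real.exp (t ^ 2)

noncomputable def II (n : ℕ) : ℝ := ∫ t in (0:ℝ)..1, (1-t^2)^n * Real.exp (t^2/2)

lemma contII (n : ℕ) : Continuous (fun t : ℝ => (1-t^2)^n * Real.exp (t^2/2)) := by
  continuity

lemma intII (n : ℕ) : IntervalIntegrable (fun t : ℝ => (1-t^2)^n * Real.exp (t^2/2))
    MeasureTheory.volume 0 1 := (contII n).intervalIntegrable _ _

lemma II_rec (n : ℕ) : II (n+2) = 2*(n+2)*II (n+1) - 2*(n+1)*II n := by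
  have key : ∫ t in (0:ℝ)..1,
      ((1-t^2)^(n+2) * Real.exp (t^2/2) - (2*(n+2)*((1-t^2)^(n+1) * Real.exp (t^2/2))
        - 2*(n+1)*((1-t^2)^n * Real.exp (t^2/2)))) = 0 := by
    have hderiv : ∀ t ∈ Set.uIcc (0:ℝ) 1,
        HasDerivAt (fun t : ℝ => -(t * (1-t^2)^(n+1) * Real.exp (t^2/2)))
          ((1-t^2)^(n+2) * Real.exp (t^2/2) - (2*(n+2)*((1-t^2)^(n+1) * Real.exp (t^2/2))
            - 2*(n+1)*((1-t^2)^n * Real.exp (t^2/2)))) t := by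
      intro t _
      have h1 : HasDerivAt (fun t : ℝ => (1-t^2)^(n+1)) (((n:ℝ)+1) * (1-t^2)^n * (-(2*t))) t := by
        have : HasDerivAt (fun t : ℝ => 1-t^2) (-(2*t)) t := by
          simpa using ((hasDerivAt_pow 2 t).const_sub 1)
        simpa [mul_comm, Nat.cast_add, Function.comp_def] using ((hasDerivAt_pow (n+1) (1-t^2)).comp t this)
      have h2 : HasDerivAt (fun t : ℝ => Real.exp (t^2/2)) (t * Real.exp (t^2/2)) t := by
        have ht : HasDerivAt (fun t : ℝ => t^2/2) t t := by
          simpa using (hasDerivAt_pow 2 t).div_const 2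
        simpa [mul_comm, Function.comp_def] using (Real.hasDerivAt_exp (t^2/2)).comp t ht
      have h3 : HasDerivAt (fun t : ℝ => t * (1-t^2)^(n+1) * Real.exp (t^2/2))
          ((1 * (1-t^2)^(n+1) + t * (((n:ℝ)+1) * (1-t^2)^n * (-(2*t)))) * Real.exp (t^2/2)
            + t * (1-t^2)^(n+1) * (t * Real.exp (t^2/2))) t := by
        exact ((hasDerivAt_id t).mul h1).mul h2
      have := h3.neg
      refine this.congr_deriv ?_
      have e1 : (1-t^2)^(n+1) = (1-t^2)^n * (1-t^2) := pow_succ _ _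
      have e2 : (1-t^2)^(n+2) = (1-t^2)^n * (1-t^2) * (1-t^2) := by
        rw [pow_succ, pow_succ]
      rw [e2, e1]; ring
    have := intervalIntegral.integral_eq_sub_of_hasDerivAt hderiv
      (by apply Continuous.intervalIntegrable; continuity)
    simpa using this
  have hsplit : ∫ t in (0:ℝ)..1,
      ((1-t^2)^(n+2) * Real.exp (t^2/2) - (2*(n+2)*((1-t^2)^(n+1) * Real.exp (t^2/2))
        - 2*(n+1)*((1-t^2)^n * Real.exp (t^2/2))))
      = II (n+2) - (2*(n+2)*II (n+1) - 2*(n+1)*II n) := by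
    rw [intervalIntegral.integral_sub (intII (n+2))
      (((intII (n+1)).const_mul _).sub ((intII n).const_mul _)),
      intervalIntegral.integral_sub ((intII (n+1)).const_mul _) ((intII n).const_mul _),
      intervalIntegral.integral_const_mul, intervalIntegral.integral_const_mul]
    rfl
  rw [hsplit] at key
  linarith

lemma II_one : II 1 = 2 * II 0 - Real.exp (1/2) := by
  have key : ∫ t in (0:ℝ)..1, (1+t^2) * Real.exp (t^2/2) = Real.exp (1/2) := by
    have hderiv : ∀ t ∈ Set.uIcc (0:ℝ) 1,
        HasDerivAt (fun t : ℝ => t * Real.exp (t^2/2)) ((1+t^2) * Real.exp (t^2/2)) t := by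
      intro t _
      have h2 : HasDerivAt (fun t : ℝ => Real.exp (t^2/2)) (t * Real.exp (t^2/2)) t := by
        have ht : HasDerivAt (fun t : ℝ => t^2/2) t t := by
          simpa using (hasDerivAt_pow 2 t).div_const 2
        simpa [mul_comm, Function.comp_def] using (Real.hasDerivAt_exp (t^2/2)).comp t ht
      have := (hasDerivAt_id t).mul h2
      refine this.congr_deriv ?_
      simp only [id_eq]
      ring
    have := intervalIntegral.integral_eq_sub_of_hasDerivAt hderiv
      (by apply Continuous.intervalIntegrable; continuity)
    simpa using this
  have hsplit : ∫ t in (0:ℝ)..1, (1+t^2) * Real.exp (t^2/2)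
      = 2 * II 0 - II 1 := by
    have : ∀ t : ℝ, (1+t^2) * Real.exp (t^2/2)
        = 2*((1-t^2)^0 * Real.exp (t^2/2)) - (1-t^2)^1 * Real.exp (t^2/2) := by
      intro t; ring
    rw [intervalIntegral.integral_congr (fun t _ => this t),
      intervalIntegral.integral_sub ((intII 0).const_mul _) (intII 1),
      intervalIntegral.integral_const_mul]
    rfl
  rw [hsplit] at key
  linarith

lemma II_nonneg (n : ℕ) : 0 ≤ II n := by
  apply intervalIntegral.integral_nonneg (by norm_num)
  intro t ht
  have h1 : (0:ℝ) ≤ 1 - t^2 := by nlinarith [ht.1, ht.2]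
  positivity

lemma II_le (n : ℕ) : II n ≤ Real.exp (1/2) := by
  have : II n ≤ ∫ _ in (0:ℝ)..1, Real.exp (1/2) := by
    apply intervalIntegral.integral_mono_on (by norm_num) (intII n)
      (intervalIntegrable_const)
    intro t ht
    have h1 : (0:ℝ) ≤ 1 - t^2 := by nlinarith [ht.1, ht.2]
    have h2 : (1 - t^2)^n ≤ 1 := pow_le_one₀ h1 (by nlinarith [ht.1, ht.2])
    have h3 : Real.exp (t^2/2) ≤ Real.exp (1/2) :=
      Real.exp_le_exp.2 (by nlinarith [ht.1, ht.2])
    calc (1-t^2)^n * Real.exp (t^2/2) ≤ 1 * Real.exp (1/2) := by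
          exact mul_le_mul h2 h3 (Real.exp_pos _).le zero_le_one
      _ = Real.exp (1/2) := one_mul _
  simpa using this

noncomputable def BB : ℕ → ℝ
  | 0 => 1
  | 1 => 1
  | (n+2) => BB (n+1) - BB n / (2*(n+2))

noncomputable def AA : ℕ → ℝ
  | 0 => 0
  | 1 => -(1/2)
  | (n+2) => AA (n+1) - AA n / (2*(n+2))

noncomputable def eps (n : ℕ) : ℝ := Real.exp (-(1/2)) / (2^n * n.factorial) * II n

noncomputable def y0 : ℝ := Real.exp (-(1/2)) * II 0

lemma eps_zero : eps 0 = y0 := by simp [eps, y0]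

lemma eps_one : eps 1 = y0 - 1/2 := by
  simp only [eps, y0, II_one, Nat.factorial_one, pow_one]
  rw [Real.exp_neg]
  have h := Real.exp_pos (1/2 : ℝ)
  field_simp
  ring

lemma eps_rec (n : ℕ) : eps (n+2) = eps (n+1) - eps n / (2*(n+2)) := by
  have hrec := II_rec n
  simp only [eps]
  have hf2 : ((n+2).factorial : ℝ) = (n+2) * (n+1) * n.factorial := by
    rw [Nat.factorial_succ, Nat.factorial_succ]; push_cast; ring
  have hf1 : ((n+1).factorial : ℝ) = (n+1) * n.factorial := by
    rw [Nat.factorial_succ]; push_cast; ring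
  have hfpos : (0:ℝ) < n.factorial := by positivity
  have h2pos : (0:ℝ) < 2^n := by positivity
  rw [hrec, hf2, hf1, pow_succ, pow_succ]
  have hn1 : (0:ℝ) < (n:ℝ)+1 := by positivity
  have hn2 : (0:ℝ) < (n:ℝ)+2 := by positivity
  field_simp

lemma eps_nonneg (n : ℕ) : 0 ≤ eps n := by
  have := II_nonneg n
  have : (0:ℝ) ≤ Real.exp (-(1/2)) / (2^n * n.factorial) := by positivity
  exact mul_nonneg this (II_nonneg n)

lemma eps_le (n : ℕ) : eps n ≤ 1 / (2^n * n.factorial) := by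
  have h1 : eps n ≤ Real.exp (-(1/2)) / (2^n * n.factorial) * Real.exp (1/2) := by
    apply mul_le_mul_of_nonneg_left (II_le n) (by positivity)
  calc eps n ≤ Real.exp (-(1/2)) / (2^n * n.factorial) * Real.exp (1/2) := h1
    _ = (Real.exp (-(1/2)) * Real.exp (1/2)) / (2^n * n.factorial) := by ring
    _ = 1 / (2^n * n.factorial) := by rw [← Real.exp_add]; norm_num

lemma AABB : ∀ n, AA n + y0 * BB n = eps n := by
  have key : ∀ n, (AA n + y0 * BB n = eps n) ∧ (AA (n+1) + y0 * BB (n+1) = eps (n+1)) := by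
    intro n
    induction n with
    | zero =>
      constructor
      · simp [AA, BB, eps_zero]
      · show -(1/2) + y0 * 1 = eps 1
        rw [eps_one]; ring
    | succ m ih =>
      refine ⟨ih.2, ?_⟩
      show AA (m+2) + y0 * BB (m+2) = eps (m+2)
      rw [eps_rec, ← ih.1, ← ih.2]
      show AA (m+1) - AA m / (2*(m+2)) + y0 * (BB (m+1) - BB m / (2*(m+2))) = _
      ring
  exact fun n => (key n).1

lemma BB_inv : ∀ n, BB n ≤ 2 * BB (n+1) ∧ 1 ≤ ((n:ℝ)+1) * BB (n+1) := by
  intro n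
  induction n with
  | zero => constructor <;> simp [BB]
  | succ m ih =>
    have hm2 : (0:ℝ) < (m:ℝ)+2 := by positivity
    have hBm1 : 0 < BB (m+1) := by nlinarith [ih.2, Nat.cast_nonneg (α := ℝ) m]
    have hval : BB (m+2) = BB (m+1) - BB m / (2*((m:ℝ)+2)) := by
      show BB (m+1) - BB m / _ = _
      norm_num
    have haux : ((m:ℝ)+2) * (BB m / (2*((m:ℝ)+2))) = BB m / 2 := by field_simp
    have hstep : ((m:ℝ)+2) * BB (m+2) ≥ ((m:ℝ)+1) * BB (m+1) := by
      rw [hval]; nlinarith [ih.1]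
    constructor
    · nlinarith [hstep, hBm1, Nat.cast_nonneg (α := ℝ) m]
    · push_cast
      nlinarith [hstep, ih.2]

lemma BB_pos : ∀ n : ℕ, 0 < BB n := by
  intro n
  match n with
  | 0 => norm_num [BB]
  | (m+1) =>
    have h := (BB_inv m).2
    nlinarith [Nat.cast_nonneg (α := ℝ) m]

lemma BB_lb : ∀ n : ℕ, 1/((n:ℝ)+1) ≤ BB n := by
  intro n
  match n with
  | 0 => norm_num [BB]
  | (m+1) =>
    have h := (BB_inv m).2
    have hm : (0:ℝ) < (m:ℝ)+1 := by positivity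
    rw [div_le_iff₀ (by push_cast; positivity)]
    push_cast
    nlinarith [BB_pos (m+1)]

lemma denom_pos (n : ℕ) (x : ℝ) (hx : -(1/2) < x) : 0 < BB (n+1) + x * BB n := by
  have h1 := (BB_inv n).1
  have h2 := BB_pos n
  have h3 := BB_pos (n+1)
  nlinarith

lemma cf_tail : ∀ N (x : ℝ), -(1/2) < x → x ≤ 0 →
    (List.range (N+1)).foldr
      (fun i acc => (-1 / (2 * ((i+1 : ℕ) : ℝ))) / (1 + acc)) x
      = (AA (N+1) + x * AA N) / (BB (N+1) + x * BB N) := by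
  intro N
  induction N with
  | zero =>
    intro x hx1 hx2
    show (-1 / (2 * ((1:ℕ):ℝ))) / (1 + x) = (AA 1 + x * AA 0) / (BB 1 + x * BB 0)
    show _ = (-(1/2) + x * 0) / (1 + x * 1)
    norm_num
  | succ M ih =>
    intro x hx1 hx2
    have hx : (0:ℝ) < 1 + x := by linarith
    rw [List.range_succ, List.foldr_append]
    have hfold : (List.foldr (fun i acc => (-1 / (2 * ((i+1 : ℕ) : ℝ))) / (1 + acc)) x [M+1])
        = (-1 / (2 * ((M+2 : ℕ) : ℝ))) / (1 + x) := by
      simp only [List.foldr]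
    rw [hfold]
    set y := (-1 / (2 * ((M+2 : ℕ) : ℝ))) / (1 + x) with hy
    have hM2 : (0:ℝ) < ((M+2 : ℕ) : ℝ) := by positivity
    have hy2 : y ≤ 0 := by
      apply div_nonpos_of_nonpos_of_nonneg _ hx.le
      have : (0:ℝ) < 2 * ((M+2 : ℕ) : ℝ) := by positivity
      apply div_nonpos_of_nonpos_of_nonneg <;> linarith
    have hy1 : -(1/2) < y := by
      rw [hy, neg_lt, ← neg_div, neg_div']
      rw [div_lt_iff₀ hx]
      have h1 : (1:ℝ)/(2 * ((M+2 : ℕ) : ℝ)) ≤ 1/4 := by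
        rw [div_le_div_iff₀ (by positivity) (by norm_num)]
        push_cast; linarith
      have : - -1 / (2 * ((M+2:ℕ):ℝ)) = 1 / (2 * ((M+2:ℕ):ℝ)) := by norm_num
      rw [this]
      nlinarith
    rw [ih y hy1 hy2]
    have hD1 : 0 < BB (M+1) + y * BB M := denom_pos M y hy1
    have hD2 : 0 < BB (M+2) + x * BB (M+1) := denom_pos (M+1) x hx1
    rw [div_eq_div_iff (ne_of_gt hD1) (ne_of_gt hD2)]
    have hA : AA (M+2) = AA (M+1) + (-1 / (2 * ((M+2 : ℕ) : ℝ))) * AA M := by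
      show AA (M+1) - AA M / (2*((M:ℝ)+2)) = _
      push_cast; ring
    have hB : BB (M+2) = BB (M+1) + (-1 / (2 * ((M+2 : ℕ) : ℝ))) * BB M := by
      show BB (M+1) - BB M / (2*((M:ℝ)+2)) = _
      push_cast; ring
    have hyx : y * (1 + x) = -1 / (2 * ((M+2 : ℕ) : ℝ)) := by
      rw [hy, div_mul_cancel₀ _ (ne_of_gt hx)]
    rw [hA, hB]
    linear_combination (AA M * BB (M+1) - AA (M+1) * BB M) * hyx

lemma y0_eq : y0 = Real.sqrt (Real.pi / (2 * Real.exp 1)) * erfi (1 / Real.sqrt 2) := by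
  have hs2 : (0:ℝ) < Real.sqrt 2 := Real.sqrt_pos.2 (by norm_num)
  have hpi : (0:ℝ) < Real.sqrt Real.pi := Real.sqrt_pos.2 Real.pi_pos
  have hc : ((Real.sqrt 2)⁻¹ : ℝ) ≠ 0 := by positivity
  have hII : II 0 = ∫ t in (0:ℝ)..1, Real.exp (t^2/2) := by
    unfold II
    congr 1 with t
    norm_num
  have hsub : (∫ t in (0:ℝ)..1, Real.exp (t^2/2))
      = Real.sqrt 2 * ∫ u in (0:ℝ)..(1/Real.sqrt 2), Real.exp (u^2) := by
    have h := intervalIntegral.integral_comp_mul_right (a := (0:ℝ)) (b := 1)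
      (fun u => Real.exp (u^2)) hc
    have heq : ∀ t : ℝ, Real.exp ((t * (Real.sqrt 2)⁻¹)^2) = Real.exp (t^2/2) := by
      intro t
      congr 1
      rw [mul_pow, inv_pow, Real.sq_sqrt (by norm_num : (0:ℝ) ≤ 2)]
      ring
    simp only [heq] at h
    rw [h]
    norm_num [smul_eq_mul, inv_inv, one_div]
  have hE : Real.sqrt (Real.pi / (2 * Real.exp 1))
      = Real.sqrt Real.pi / (Real.sqrt 2 * Real.exp (1/2)) := by
    have h1 : (2 * Real.exp 1 : ℝ) = (Real.sqrt 2 * Real.exp (1/2))^2 := by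
      rw [mul_pow, Real.sq_sqrt (by norm_num : (0:ℝ) ≤ 2), sq, ← Real.exp_add]
      norm_num
    rw [h1, Real.sqrt_div Real.pi_pos.le, Real.sqrt_sq (by positivity)]
  rw [y0, hII, hsub, hE, erfi]
  have hexp : Real.exp (-(1/2)) = (Real.exp (1/2))⁻¹ := by
    rw [← Real.exp_neg]
  rw [hexp]
  have hs2' : Real.sqrt 2 * Real.sqrt 2 = 2 := Real.mul_self_sqrt (by norm_num)
  have hepos : (0:ℝ) < Real.exp (1/2) := Real.exp_pos _
  field_simp
  linear_combination (∫ u in (0:ℝ)..(1/Real.sqrt 2), Real.exp (u^2)) * hs2'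

theorem cf_neg_one_over_two_n :
    Tendsto (cf (fun n => -1 / (2 * (n : ℝ))) (fun _ => 1)) atTop
      (nhds (-(Real.sqrt (Real.pi / (2 * Real.exp 1)) * erfi (1 / Real.sqrt 2)))) := by
  have hcf : ∀ N, cf (fun n => -1 / (2 * (n : ℝ))) (fun _ => 1) N = AA N / BB N := by
    intro N
    match N with
    | 0 => simp [cf, AA, BB]
    | (M+1) =>
      have h := cf_tail M 0 (by norm_num) le_rfl
      unfold cf
      rw [h]
      norm_num
  have key : ∀ N, cf (fun n => -1 / (2 * (n : ℝ))) (fun _ => 1) N = eps N / BB N - y0 := by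
    intro N
    rw [hcf N]
    have hB := BB_pos N
    have := AABB N
    field_simp
    linarith
  have hfact : ∀ N : ℕ, (2:ℝ)^N ≤ 2 * N.factorial := by
    intro N
    have : 2^N ≤ 2 * N.factorial := by
      induction N with
      | zero => norm_num
      | succ m ih =>
        match m with
        | 0 => norm_num
        | (k+1) =>
          calc 2^(k+2) = 2 * 2^(k+1) := by ring
            _ ≤ 2 * (2 * (k+1).factorial) := by omega
            _ ≤ 2 * (k+2).factorial := by
                have : 2 * (k+1).factorial ≤ (k+2) * (k+1).factorial :=
                  Nat.mul_le_mul_right _ (by omega)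
                have h2 : (k+2).factorial = (k+2) * (k+1).factorial := rfl
                omega
    exact_mod_cast this
  have hub : ∀ N : ℕ, eps N / BB N ≤ 2 * (1/2:ℝ)^N := by
    intro N
    have hB := BB_pos N
    have hBlb := BB_lb N
    have hN1 : (0:ℝ) < (N:ℝ)+1 := by positivity
    have h1 : eps N / BB N ≤ ((N:ℝ)+1) * eps N := by
      rw [div_le_iff₀ hB]
      have h2 : 1 ≤ ((N:ℝ)+1) * BB N := by
        rw [div_le_iff₀ hN1] at hBlb
        linarith
      nlinarith [eps_nonneg N]
    have h2 : ((N:ℝ)+1) * eps N ≤ ((N:ℝ)+1) * (1 / (2^N * N.factorial)) :=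
      mul_le_mul_of_nonneg_left (eps_le N) hN1.le
    have hNle : ((N:ℝ)+1) ≤ 2^N := by
      have := Nat.lt_two_pow_self (n := N)
      exact_mod_cast Nat.succ_le_of_lt this
    have hfpos : (0:ℝ) < N.factorial := by positivity
    have h3 : ((N:ℝ)+1) * (1 / (2^N * N.factorial)) ≤ 1 / N.factorial := by
      rw [mul_one_div, div_le_div_iff₀ (by positivity) hfpos]
      calc ((N:ℝ)+1) * N.factorial ≤ 2^N * N.factorial :=
            mul_le_mul_of_nonneg_right hNle hfpos.le
        _ = 1 * (2^N * N.factorial) := by ring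
    have h4 : (1:ℝ) / N.factorial ≤ 2 * (1/2:ℝ)^N := by
      have h5 : (2:ℝ)^N ≤ 2 * N.factorial := hfact N
      rw [div_le_iff₀ hfpos]
      have h6 : (0:ℝ) < (2:ℝ)^N := by positivity
      have : 2 * (1/2:ℝ)^N = 2 / 2^N := by
        rw [one_div, inv_pow, ← div_eq_mul_inv]
      rw [this, div_mul_eq_mul_div, le_div_iff₀ h6]
      linarith
    linarith
  have hlb : ∀ N : ℕ, (0:ℝ) ≤ eps N / BB N := fun N =>
    div_nonneg (eps_nonneg N) (BB_pos N).le
  have hquot : Tendsto (fun N => eps N / BB N) atTop (nhds 0) := by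
    apply tendsto_of_tendsto_of_tendsto_of_le_of_le
      (tendsto_const_nhds) ?_ hlb hub
    have := (tendsto_pow_atTop_nhds_zero_of_lt_one
      (by norm_num : (0:ℝ) ≤ 1/2) (by norm_num : (1/2:ℝ) < 1)).const_mul 2
    simpa using this
  have hmain : Tendsto (cf (fun n => -1 / (2 * (n : ℝ))) (fun _ => 1)) atTop (nhds (0 - y0)) := by
    apply Tendsto.congr (fun N => (key N).symm)
    exact hquot.sub_const y0
  rw [zero_sub, y0_eq] at hmain
  exact hmain
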